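/- arXiv:2103.11469 — 2 statements merged into one kernel-verified Lean document; each statement's English description precedes it below -/
import Mathlib

section
/- Let w ≥ 1 and z ≥ 2 be integers. Consider a sample tree of capacity k ≥ 1 and width w in which every sample (partition) of every internal node has split size lying in the interval [2, z]. Then the number P of distinct district plans admitted by the tree satisfies w^((k-1)/(z-1)) ≤ P ≤ w^(k-1), where the exponents are real numbers. -/
/-- `SampleTreeCount w z k P` asserts that there exists a sample tree of capacity `k` and
width `w`, in which every sample (partition) of every internal node has split size lying in
the interval `[2, z]`, that admits exactly `P` distinct district plans.

A sample tree of capacity `s` and width `w` is defined recursively: if `s = 1` it is a leaf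
(admitting exactly one plan); if `s > 1` it consists of exactly `w` samples, where each
sample is a finite list of sample trees whose capacities are positive integers summing
to `s` and whose length (the split size) is at least `2` (here also at most `z`).
The number of distinct plans of an internal node is the sum over its `w` samples of the
product of the plan counts of the children in that sample.  Each sample `i` is encoded as
a list of pairs `(capacity, plan count)` of its children. -/
inductive SampleTreeCount (w z : ℕ) : ℕ → ℕ → Prop
  | leaf : SampleTreeCount w z 1 1
  | node (k : ℕ) (samples : Fin w → List (ℕ × ℕ))
      (hsplit : ∀ i, 2 ≤ (samples i).length ∧ (samples i).length ≤ z)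
      (hpos : ∀ i, ∀ p ∈ samples i, 0 < p.1)
      (hsum : ∀ i, ((samples i).map Prod.fst).sum = k)
      (hchild : ∀ i, ∀ p ∈ samples i, SampleTreeCount w z p.1 p.2) :
      SampleTreeCount w z k (∑ i : Fin w, ((samples i).map Prod.snd).prod)

lemma list_prod_bounds (w z : ℕ) (hw : 1 ≤ w) (hz : 2 ≤ z) (l : List (ℕ × ℕ))
    (h : ∀ p ∈ l, (w : ℝ) ^ (((p.1 : ℝ) - 1) / ((z : ℝ) - 1)) ≤ (p.2 : ℝ) ∧
      (p.2 : ℝ) ≤ (w : ℝ) ^ ((p.1 : ℝ) - 1)) :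
    (w : ℝ) ^ ((((l.map Prod.fst).sum : ℝ) - l.length) / ((z : ℝ) - 1)) ≤
      ((l.map Prod.snd).prod : ℝ) ∧
    ((l.map Prod.snd).prod : ℝ) ≤ (w : ℝ) ^ (((l.map Prod.fst).sum : ℝ) - l.length) := by
  have hw1 : (1 : ℝ) ≤ (w : ℝ) := by exact_mod_cast hw
  have hw0 : (0 : ℝ) < (w : ℝ) := by linarith
  induction l with
  | nil => simp
  | cons p l ih =>
    obtain ⟨ih1, ih2⟩ := ih (fun q hq => h q (List.mem_cons_of_mem p hq))
    obtain ⟨h1, h2⟩ := h p List.mem_cons_self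
    have e1 : ((((p :: l).map Prod.fst).sum : ℝ) - (p :: l).length) / ((z : ℝ) - 1)
        = ((p.1 : ℝ) - 1) / ((z : ℝ) - 1) +
          (((l.map Prod.fst).sum : ℝ) - l.length) / ((z : ℝ) - 1) := by
      simp only [List.map_cons, List.sum_cons, List.length_cons, Nat.cast_add, Nat.cast_one]
      ring
    have e2 : ((((p :: l).map Prod.fst).sum : ℝ) - (p :: l).length)
        = ((p.1 : ℝ) - 1) + (((l.map Prod.fst).sum : ℝ) - l.length) := by
      simp only [List.map_cons, List.sum_cons, List.length_cons, Nat.cast_add, Nat.cast_one]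
      ring
    have hp2 : (0 : ℝ) ≤ (p.2 : ℝ) := by positivity
    have hr2 : (0 : ℝ) ≤ (w : ℝ) ^ ((((l.map Prod.fst).sum : ℝ) - l.length) / ((z : ℝ) - 1)) :=
      (Real.rpow_pos_of_pos hw0 _).le
    constructor
    · rw [e1, Real.rpow_add hw0]
      rw [List.map_cons, List.prod_cons, Nat.cast_mul]
      exact mul_le_mul h1 ih1 hr2 hp2
    · rw [e2, Real.rpow_add hw0]
      rw [List.map_cons, List.prod_cons, Nat.cast_mul]
      exact mul_le_mul h2 ih2 (by positivity) (Real.rpow_pos_of_pos hw0 _).le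

/-- **Plan-count bounds for a sample tree.**  Let `w ≥ 1` and `z ≥ 2` be integers.  For a
sample tree of capacity `k ≥ 1` and width `w`, in which every sample of every internal node
has split size in `[2, z]`, the number `P` of distinct district plans admitted by the tree
satisfies `w ^ ((k - 1) / (z - 1)) ≤ P ≤ w ^ (k - 1)`, where the exponents are real. -/
theorem sampleTree_plan_count_bounds (w z k P : ℕ) (hw : 1 ≤ w) (hz : 2 ≤ z) (hk : 1 ≤ k)
    (h : SampleTreeCount w z k P) :
    (w : ℝ) ^ (((k : ℝ) - 1) / ((z : ℝ) - 1)) ≤ (P : ℝ) ∧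
      (P : ℝ) ≤ (w : ℝ) ^ ((k : ℝ) - 1) := by
  have hw1 : (1 : ℝ) ≤ (w : ℝ) := by exact_mod_cast hw
  have hw0 : (0 : ℝ) < (w : ℝ) := by linarith
  have hz1 : (1 : ℝ) ≤ (z : ℝ) - 1 := by
    have : (2 : ℝ) ≤ (z : ℝ) := by exact_mod_cast hz
    linarith
  clear hk
  induction h with
  | leaf => simp
  | node k samples hsplit hpos hsum hchild ih =>
    have key : ∀ i, (w : ℝ) ^ (((k : ℝ) - 1) / ((z : ℝ) - 1) - 1) ≤
        (((samples i).map Prod.snd).prod : ℝ) ∧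
        (((samples i).map Prod.snd).prod : ℝ) ≤ (w : ℝ) ^ ((k : ℝ) - 2) := by
      intro i
      obtain ⟨hlo, hhi⟩ := list_prod_bounds w z hw hz (samples i) (fun p hp => ih i p hp)
      have hsumi : (((samples i).map Prod.fst).sum : ℝ) = (k : ℝ) := by
        exact_mod_cast congrArg (Nat.cast : ℕ → ℝ) (hsum i)
      rw [hsumi] at hlo hhi
      obtain ⟨hl2, hlz⟩ := hsplit i
      constructor
      · refine le_trans (Real.rpow_le_rpow_of_exponent_le hw1 ?_) hlo
        have hlzR : ((samples i).length : ℝ) ≤ (z : ℝ) := by exact_mod_cast hlz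
        rw [div_sub_one (by linarith), div_le_div_iff₀ (by linarith) (by linarith)]
        nlinarith
      · refine le_trans hhi (Real.rpow_le_rpow_of_exponent_le hw1 ?_)
        have : (2 : ℝ) ≤ ((samples i).length : ℝ) := by exact_mod_cast hl2
        linarith
    rw [Nat.cast_sum]
    constructor
    · calc (w : ℝ) ^ (((k : ℝ) - 1) / ((z : ℝ) - 1))
          = (w : ℝ) * (w : ℝ) ^ (((k : ℝ) - 1) / ((z : ℝ) - 1) - 1) := by
            have h' := Real.rpow_add hw0 1 (((k : ℝ) - 1) / ((z : ℝ) - 1) - 1)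
            rw [Real.rpow_one] at h'
            rw [← h']
            congr 1
            ring
        _ = ∑ _i : Fin w, (w : ℝ) ^ (((k : ℝ) - 1) / ((z : ℝ) - 1) - 1) := by
            rw [Finset.sum_const, Finset.card_univ, Fintype.card_fin, nsmul_eq_mul]
        _ ≤ ∑ i : Fin w, ((((samples i).map Prod.snd).prod : ℕ) : ℝ) :=
            Finset.sum_le_sum (fun i _ => (key i).1)
    · calc ∑ i : Fin w, ((((samples i).map Prod.snd).prod : ℕ) : ℝ)
          ≤ ∑ _i : Fin w, (w : ℝ) ^ ((k : ℝ) - 2) :=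
            Finset.sum_le_sum (fun i _ => (key i).2)
        _ = (w : ℝ) * (w : ℝ) ^ ((k : ℝ) - 2) := by
            rw [Finset.sum_const, Finset.card_univ, Fintype.card_fin, nsmul_eq_mul]
        _ = (w : ℝ) ^ ((k : ℝ) - 1) := by
            have h' := Real.rpow_add hw0 1 ((k : ℝ) - 2)
            rw [Real.rpow_one] at h'
            rw [← h']
            congr 1
            ring
end

section
/- Let G be a simple graph on a finite vertex set, let i be a vertex, and let D be a set of vertices with i ∈ D. Suppose that for every vertex j ∈ D with j ≠ i there exists a vertex k ∈ D adjacent to j in G such that dist_G(i, k) < dist_G(i, j), where dist_G denotes shortest-path (graph) distance and every j ∈ D is reachable from i in G. Then the subgraph of G induced on D is connected. -/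
/-- **Correctness of the shortest-path-tree contiguity constraints.**  Let `G` be a simple
graph on a finite vertex set, `i` a vertex, and `D` a set of vertices containing `i` such
that every `j ∈ D` is reachable from `i`.  If every `j ∈ D` other than `i` has some
neighbor `k ∈ D` strictly closer to `i` in shortest-path distance, then the subgraph of
`G` induced on `D` is connected. -/
theorem induce_connected_of_closer_neighbor {V : Type*} [Fintype V]
    (G : SimpleGraph V) (i : V) (D : Set V) (hi : i ∈ D)
    (hreach : ∀ j ∈ D, G.Reachable i j)
    (hcloser : ∀ j ∈ D, j ≠ i → ∃ k ∈ D, G.Adj j k ∧ G.dist i k < G.dist i j) :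
    (G.induce D).Connected := by
  have key : ∀ n : ℕ, ∀ j (hj : j ∈ D), G.dist i j ≤ n →
      (G.induce D).Reachable ⟨i, hi⟩ ⟨j, hj⟩ := by
    intro n
    induction n with
    | zero =>
      intro j hj hle
      have : i = j := (hreach j hj).dist_eq_zero_iff.mp (Nat.le_zero.mp hle)
      subst this
      exact SimpleGraph.Reachable.refl _
    | succ n ih =>
      intro j hj hle
      by_cases hji : j = i
      · subst hji; exact SimpleGraph.Reachable.refl _
      · obtain ⟨k, hk, hadj, hlt⟩ := hcloser j hj hji
        have hk' : (G.induce D).Reachable ⟨i, hi⟩ ⟨k, hk⟩ :=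
          ih k hk (by omega)
        exact hk'.trans (SimpleGraph.Adj.reachable (by exact hadj.symm))
  have hne : Set.Nonempty D := ⟨i, hi⟩
  rw [SimpleGraph.connected_iff]
  refine ⟨fun a b => ?_, ⟨⟨i, hi⟩⟩⟩
  exact (key (G.dist i a.1) a.1 a.2 le_rfl).symm.trans (key (G.dist i b.1) b.1 b.2 le_rfl)
end
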